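/- Let T > 0, A > 0, C > 0 and B ≥ (CT)² + 1. Suppose nonnegative reals a_0, …, a_{k-1} satisfy a_j ≤ B^{j+1} j! for 0 ≤ j ≤ k-1. Then ∑_{j=0}^{k-1} (CT)^{k-j} binom(k,j) a_j ≤ (3 + CT) B^k k!. -/

import Mathlib

/-- auxiliary weight function -/
noncomputable def gevreyAuxG (x : ℝ) (m : ℕ) : ℝ := if m = 1 then x else (1/2:ℝ)^(m-1)

lemma gevreyAuxG_one (x : ℝ) : gevreyAuxG x 1 = x := by simp [gevreyAuxG]

lemma gevreyAuxG_ne (x : ℝ) {m : ℕ} (h : m ≠ 1) : gevreyAuxG x m = (1/2:ℝ)^(m-1) := by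
  simp [gevreyAuxG, h]

lemma gevreyAux_two_pow_le_factorial : ∀ m : ℕ, (2:ℕ)^(m-1) ≤ m.factorial := by
  intro m
  induction m with
  | zero => simp [Nat.factorial]
  | succ n ih =>
    cases n with
    | zero => simp [Nat.factorial]
    | succ p =>
      have key : (2:ℕ)^p ≤ (p+1).factorial := by simpa using ih
      have h1 : p + 1 + 1 - 1 = p + 1 := rfl
      rw [h1, pow_succ]
      calc (2:ℕ)^p * 2 ≤ (p+1).factorial * (p+2) := Nat.mul_le_mul key (by omega)
        _ = (p+2) * (p+1).factorial := Nat.mul_comm _ _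
        _ = (p+2).factorial := rfl

/-- elementary combinatorial estimate closing the Gevrey induction. -/
theorem gevrey_induction_sum_bound (T A C B : ℝ) (hT : 0 < T) (hA : 0 < A)
    (hC : 0 < C) (hB : (C*T)^2 + 1 ≤ B) (k : ℕ) (a : ℕ → ℝ)
    (ha : ∀ j, 0 ≤ a j)
    (hbound : ∀ j ≤ k - 1, a j ≤ B^(j+1) * Nat.factorial j) :
    ∑ j ∈ Finset.range k, (C*T)^(k-j) * (Nat.choose k j) * a j
      ≤ (3 + C*T) * B^k * Nat.factorial k := by
  set x := C*T with hxdef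
  have hx : 0 < x := mul_pos hC hT
  have hB1 : (1:ℝ) ≤ B := le_trans (by nlinarith [sq_nonneg x]) hB
  have hx2 : x^2 ≤ B := by nlinarith
  have hB0 : (0:ℝ) ≤ B := le_trans zero_le_one hB1
  have hxm : ∀ m : ℕ, 2 ≤ m → x^m ≤ B^(m-1) := by
    intro m hm
    rcases le_or_gt x 1 with hx1 | hx1
    · calc x^m ≤ 1^m := pow_le_pow_left₀ hx.le hx1 m
        _ = 1 := one_pow m
        _ ≤ B^(m-1) := one_le_pow₀ hB1
    · calc x^m ≤ x^(2*(m-1)) := pow_le_pow_right₀ hx1.le (by omega)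
        _ = (x^2)^(m-1) := by rw [pow_mul]
        _ ≤ B^(m-1) := pow_le_pow_left₀ (sq_nonneg x) hx2 _
  have key : ∀ j ∈ Finset.range k, x^(k-j) * (Nat.choose k j : ℝ) * a j
      ≤ B^k * (Nat.factorial k) * gevreyAuxG x (k-j) := by
    intro j hj
    rw [Finset.mem_range] at hj
    have hm1 : 1 ≤ k - j := by omega
    have haj : a j ≤ B^(j+1) * Nat.factorial j := hbound j (by omega)
    have hfacid : (Nat.choose k j : ℝ) * (Nat.factorial j) * (Nat.factorial (k-j))
        = Nat.factorial k := by
      exact_mod_cast congrArg (Nat.cast (R := ℝ))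
        (Nat.choose_mul_factorial_mul_factorial (le_of_lt hj))
    have hmf : (0:ℝ) < (Nat.factorial (k-j) : ℝ) := by positivity
    have hkf : (0:ℝ) < (Nat.factorial k : ℝ) := by positivity
    have step1 : x^(k-j) * (Nat.choose k j : ℝ) * a j
        ≤ x^(k-j) * (Nat.choose k j : ℝ) * (B^(j+1) * Nat.factorial j) := by
      apply mul_le_mul_of_nonneg_left haj
      positivity
    refine step1.trans ?_
    have core : x^(k-j) * B^(j+1)
        ≤ B^k * gevreyAuxG x (k-j) * (Nat.factorial (k-j)) := by
      rcases eq_or_lt_of_le hm1 with h1 | h2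
      · -- k - j = 1
        have hmm : k - j = 1 := h1.symm
        have hjk1 : j + 1 = k := by omega
        rw [hmm, gevreyAuxG_one, hjk1]
        have : (Nat.factorial 1 : ℝ) = 1 := by norm_num [Nat.factorial]
        rw [this]
        apply le_of_eq
        ring
      · -- 2 ≤ k - j
        have hm2 : 2 ≤ k - j := h2
        have hgm : gevreyAuxG x (k-j) = (1/2:ℝ)^(k-j-1) :=
          gevreyAuxG_ne x (by omega)
        have h1 : x^(k-j) * B^(j+1) ≤ B^(k-j-1) * B^(j+1) :=
          mul_le_mul_of_nonneg_right (hxm (k-j) hm2) (by positivity)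
        have h2' : B^(k-j-1) * B^(j+1) = B^k := by
          rw [← pow_add]
          congr 1
          omega
        have h3 : (1:ℝ) ≤ (1/2:ℝ)^(k-j-1) * (Nat.factorial (k-j)) := by
          have h4 : ((2:ℝ))^(k-j-1) ≤ (Nat.factorial (k-j) : ℝ) := by
            exact_mod_cast gevreyAux_two_pow_le_factorial (k-j)
          have h5 : (0:ℝ) < (2:ℝ)^(k-j-1) := by positivity
          have h6 : (1/2:ℝ)^(k-j-1) = ((2:ℝ)^(k-j-1))⁻¹ := by
            rw [div_pow, one_pow, one_div]
          rw [h6, inv_mul_eq_div, le_div_iff₀ h5, one_mul]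
          exact h4
        calc x^(k-j) * B^(j+1) ≤ B^k := h1.trans_eq h2'
          _ = B^k * 1 := (mul_one _).symm
          _ ≤ B^k * ((1/2:ℝ)^(k-j-1) * (Nat.factorial (k-j))) :=
              mul_le_mul_of_nonneg_left h3 (by positivity)
          _ = B^k * gevreyAuxG x (k-j) * (Nat.factorial (k-j)) := by rw [hgm]; ring
    have expand : x^(k-j) * (Nat.choose k j : ℝ) * (B^(j+1) * Nat.factorial j)
          * (Nat.factorial (k-j))
        = x^(k-j) * B^(j+1) * (Nat.factorial k) := by
      rw [← hfacid]; ring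
    have target_mul : x^(k-j) * (Nat.choose k j : ℝ) * (B^(j+1) * Nat.factorial j)
          * (Nat.factorial (k-j))
        ≤ B^k * (Nat.factorial k) * gevreyAuxG x (k-j) * (Nat.factorial (k-j)) := by
      rw [expand]
      calc x^(k-j) * B^(j+1) * (Nat.factorial k)
          ≤ B^k * gevreyAuxG x (k-j) * (Nat.factorial (k-j)) * (Nat.factorial k) :=
            mul_le_mul_of_nonneg_right core hkf.le
        _ = B^k * (Nat.factorial k) * gevreyAuxG x (k-j) * (Nat.factorial (k-j)) := by ring
    exact le_of_mul_le_mul_right target_mul hmf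
  have sumg : ∑ j ∈ Finset.range k, gevreyAuxG x (k-j) ≤ x + 1 := by
    have reflect : ∑ j ∈ Finset.range k, gevreyAuxG x (k-j)
        = ∑ j ∈ Finset.range k, gevreyAuxG x (j+1) := by
      rw [← Finset.sum_range_reflect (fun i => gevreyAuxG x (i+1)) k]
      apply Finset.sum_congr rfl
      intro j hj
      rw [Finset.mem_range] at hj
      congr 1
      omega
    rw [reflect]
    have geom : ∀ n : ℕ, ∑ i ∈ Finset.range n, (1/2:ℝ)^(i+1) = 1 - (1/2:ℝ)^n := by
      intro n
      induction n with
      | zero => simp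
      | succ p ih => rw [Finset.sum_range_succ, ih]; ring
    cases k with
    | zero => simp; positivity
    | succ n =>
      rw [Finset.sum_range_succ']
      have hgi : ∑ i ∈ Finset.range n, gevreyAuxG x (i+1+1)
          = ∑ i ∈ Finset.range n, (1/2:ℝ)^(i+1) := by
        apply Finset.sum_congr rfl
        intro i _
        rw [gevreyAuxG_ne x (by omega)]
        norm_num
      rw [hgi, gevreyAuxG_one, geom n]
      have : (0:ℝ) < (1/2:ℝ)^n := by positivity
      linarith
  calc ∑ j ∈ Finset.range k, x^(k-j) * (Nat.choose k j : ℝ) * a j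
      ≤ ∑ j ∈ Finset.range k, B^k * (Nat.factorial k) * gevreyAuxG x (k-j) :=
        Finset.sum_le_sum key
    _ = B^k * (Nat.factorial k) * ∑ j ∈ Finset.range k, gevreyAuxG x (k-j) := by
        rw [Finset.mul_sum]
    _ ≤ B^k * (Nat.factorial k) * (x + 1) :=
        mul_le_mul_of_nonneg_left sumg (by positivity)
    _ ≤ (3 + x) * B^k * (Nat.factorial k) := by
        have hpos : (0:ℝ) ≤ B^k * (Nat.factorial k) := by positivity
        nlinarith [hpos]
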